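/- Let n ≥ 1, s ≥ n/2, σ ≥ 1, and fix t₀ > 0 and ε₁ > 0 with ε₁^σ t₀ < 1. Then ∫_{ε₀ ≤ |ξ| ≤ ε₁} |sin(|ξ|^σ t₀)|² |ξ|^{−2σ−2s} dξ ≥ (t₀²/4) ω_n ∫_{ε₀}^{ε₁} r^{n−1−2s} dr, and the right-hand side tends to +∞ as ε₀ → 0⁺. -/

import Mathlib

open Real MeasureTheory Filter

theorem finite_time_blowup_mechanism
    (n : ℕ) (hn : 1 ≤ n) (σ s t₀ ε₁ : ℝ) (hσ : 1 ≤ σ) (hs : (n : ℝ) / 2 ≤ s)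
    (ht₀ : 0 < t₀) (hε₁ : 0 < ε₁) (hsmall : ε₁ ^ σ * t₀ < 1)
    (ωn : ℝ) (hω : ωn = n * (volume (Metric.ball (0 : EuclideanSpace ℝ (Fin n)) 1)).toReal) :
    (∀ ε₀ : ℝ, 0 < ε₀ → ε₀ < ε₁ →
      (∫ ξ in {ξ : EuclideanSpace ℝ (Fin n) | ε₀ ≤ ‖ξ‖ ∧ ‖ξ‖ ≤ ε₁},
          |Real.sin (‖ξ‖ ^ σ * t₀)| ^ 2 * ‖ξ‖ ^ (-2 * σ - 2 * s)) ≥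
        (t₀ ^ 2 / 4) * ωn * ∫ r in ε₀..ε₁, r ^ ((n : ℝ) - 1 - 2 * s)) ∧
    Tendsto (fun ε₀ : ℝ => (t₀ ^ 2 / 4) * ωn * ∫ r in ε₀..ε₁, r ^ ((n : ℝ) - 1 - 2 * s))
      (nhdsWithin 0 (Set.Ioi 0)) atTop := by
  have hσ0 : (0:ℝ) ≤ σ := le_trans zero_le_one hσ
  set p : ℝ := (n : ℝ) - 1 - 2 * s with hp
  have hp1 : p + 1 ≤ 0 := by
    have : (n:ℝ) ≤ 2 * s := by linarith [hs]
    simp only [hp]; linarith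
  haveI : Nontrivial (EuclideanSpace ℝ (Fin n)) := by
    exact Module.nontrivial_of_finrank_pos (R := ℝ) (by rw [finrank_euclideanSpace_fin]; omega)
  have hvol : 0 < (volume (Metric.ball (0 : EuclideanSpace ℝ (Fin n)) 1)).toReal := by
    apply ENNReal.toReal_pos
    · exact (Metric.measure_ball_pos volume 0 one_pos).ne'
    · exact measure_ball_lt_top.ne
  have hωpos : 0 < ωn := by
    rw [hω]
    have : (0:ℝ) < n := by exact_mod_cast hn
    positivity
  constructor
  · intro ε₀ hε₀ hε₀₁
    set A : Set (EuclideanSpace ℝ (Fin n)) := {ξ | ε₀ ≤ ‖ξ‖ ∧ ‖ξ‖ ≤ ε₁} with hA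
    have hApre : A = (fun ξ : EuclideanSpace ℝ (Fin n) => ‖ξ‖) ⁻¹' Set.Icc ε₀ ε₁ := by
      ext ξ; simp [hA, Set.mem_Icc]
    have hAmeas : MeasurableSet A := by
      rw [hApre]; exact measurable_norm measurableSet_Icc
    have hAcomp : IsCompact A := by
      have : A = Metric.closedBall (0 : EuclideanSpace ℝ (Fin n)) ε₁ ∩
          {ξ : EuclideanSpace ℝ (Fin n) | ε₀ ≤ ‖ξ‖} := by
        ext ξ; simp [hA, Metric.mem_closedBall, dist_zero_right, and_comm]
      rw [this]
      exact (isCompact_closedBall _ _).inter_right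
        (isClosed_le continuous_const continuous_norm)
    -- polar coordinates computation
    have key : (∫ ξ in A, ‖ξ‖ ^ (-2 * s)) = ωn * ∫ r in ε₀..ε₁, r ^ p := by
      have h0 := integral_fun_norm_addHaar (volume : Measure (EuclideanSpace ℝ (Fin n)))
        (Set.indicator (Set.Icc ε₀ ε₁) (fun r : ℝ => r ^ (-2 * s)))
      rw [finrank_euclideanSpace_fin] at h0
      have hL : (∫ x : EuclideanSpace ℝ (Fin n),
          Set.indicator (Set.Icc ε₀ ε₁) (fun r : ℝ => r ^ (-2 * s)) ‖x‖)
          = ∫ ξ in A, ‖ξ‖ ^ (-2 * s) := by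
        rw [show (fun x : EuclideanSpace ℝ (Fin n) =>
            Set.indicator (Set.Icc ε₀ ε₁) (fun r : ℝ => r ^ (-2 * s)) ‖x‖)
          = Set.indicator ((fun ξ : EuclideanSpace ℝ (Fin n) => ‖ξ‖) ⁻¹' Set.Icc ε₀ ε₁)
              ((fun r : ℝ => r ^ (-2 * s)) ∘ (fun ξ => ‖ξ‖)) from
          funext fun x => (Set.indicator_comp_right _).symm]
        rw [integral_indicator (measurable_norm measurableSet_Icc), ← hApre]
        rfl
      have hR : (∫ y in Set.Ioi (0:ℝ), y ^ (n - 1) •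
          Set.indicator (Set.Icc ε₀ ε₁) (fun r : ℝ => r ^ (-2 * s)) y)
          = ∫ r in ε₀..ε₁, r ^ p := by
        have hpt : ∀ y : ℝ, y ^ (n - 1) •
            Set.indicator (Set.Icc ε₀ ε₁) (fun r : ℝ => r ^ (-2 * s)) y
            = Set.indicator (Set.Icc ε₀ ε₁) (fun r : ℝ => r ^ (n - 1) * r ^ (-2 * s)) y := by
          intro y
          by_cases hy : y ∈ Set.Icc ε₀ ε₁ <;>
            simp [Set.indicator_of_mem, Set.indicator_of_notMem, hy]
        simp only [hpt]
        rw [setIntegral_indicator measurableSet_Icc,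
          Set.inter_eq_self_of_subset_right
            (show Set.Icc ε₀ ε₁ ⊆ Set.Ioi 0 from fun y hy => lt_of_lt_of_le hε₀ hy.1),
          integral_Icc_eq_integral_Ioc, ← intervalIntegral.integral_of_le hε₀₁.le]
        apply intervalIntegral.integral_congr
        intro y hy
        rw [Set.uIcc_of_le hε₀₁.le] at hy
        have hy0 : 0 < y := lt_of_lt_of_le hε₀ hy.1
        show y ^ (n - 1) * y ^ (-2 * s) = y ^ p
        rw [← Real.rpow_natCast y (n - 1), ← Real.rpow_add hy0]
        congr 1
        rw [Nat.cast_sub hn]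
        push_cast
        ring
      rw [hL, hR] at h0
      rw [h0, hω, nsmul_eq_mul, smul_eq_mul]
      rw [measureReal_def]; ring
    -- pointwise comparison
    have hcomp : (∫ ξ in A, (t₀ ^ 2 / 4) * ‖ξ‖ ^ (-2 * s)) ≤
        ∫ ξ in A, |Real.sin (‖ξ‖ ^ σ * t₀)| ^ 2 * ‖ξ‖ ^ (-2 * σ - 2 * s) := by
      apply setIntegral_mono_on
      · refine (continuousOn_const.mul
          ((continuous_norm.continuousOn).rpow_const fun ξ hξ => Or.inl ?_)).integrableOn_compact
            hAcomp
        exact ne_of_gt (lt_of_lt_of_le hε₀ hξ.1)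
      · refine (ContinuousOn.mul ?_
          ((continuous_norm.continuousOn).rpow_const fun ξ hξ =>
            Or.inl (ne_of_gt (lt_of_lt_of_le hε₀ hξ.1)))).integrableOn_compact hAcomp
        have h1 : ContinuousOn (fun ξ : EuclideanSpace ℝ (Fin n) => ‖ξ‖ ^ σ * t₀) A :=
          (continuous_norm.continuousOn.rpow_const fun ξ _ => Or.inr hσ0).mul continuousOn_const
        exact ((Real.continuous_sin.comp_continuousOn h1).abs).pow 2
      · exact hAmeas
      · intro ξ hξ
        set r := ‖ξ‖ with hr
        have hr0 : 0 < r := lt_of_lt_of_le hε₀ hξ.1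
        set x := r ^ σ * t₀ with hx
        have hx0 : 0 < x := mul_pos (Real.rpow_pos_of_pos hr0 σ) ht₀
        have hx1 : x ≤ 1 := by
          have : r ^ σ ≤ ε₁ ^ σ := Real.rpow_le_rpow hr0.le hξ.2 hσ0
          have := mul_le_mul_of_nonneg_right this ht₀.le
          linarith
        have hsin : x / 2 ≤ |Real.sin x| := by
          have h3 : x ^ 3 ≤ x := by
            calc x ^ 3 ≤ x ^ 1 := pow_le_pow_of_le_one hx0.le hx1 (by norm_num)
            _ = x := pow_one x
          have := Real.sin_gt_sub_cube hx0
          have : x / 2 ≤ Real.sin x := by linarith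
          exact this.trans (le_abs_self _)
        have hsq : x ^ 2 / 4 ≤ |Real.sin x| ^ 2 := by
          have := pow_le_pow_left₀ (by linarith : (0:ℝ) ≤ x / 2) hsin 2
          calc x ^ 2 / 4 = (x / 2) ^ 2 := by ring
          _ ≤ |Real.sin x| ^ 2 := this
        have hrw : x ^ 2 / 4 * r ^ (-2 * σ - 2 * s) = t₀ ^ 2 / 4 * r ^ (-2 * s) := by
          have h1 : (r ^ σ) ^ 2 = r ^ (2 * σ) := by
            rw [← Real.rpow_natCast (r ^ σ) 2, ← Real.rpow_mul hr0.le]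
            norm_num [mul_comm]
          have h2 : r ^ (2 * σ) * r ^ (-2 * σ - 2 * s) = r ^ (-2 * s) := by
            rw [← Real.rpow_add hr0]; ring_nf
          calc x ^ 2 / 4 * r ^ (-2 * σ - 2 * s)
              = t₀ ^ 2 / 4 * ((r ^ σ) ^ 2 * r ^ (-2 * σ - 2 * s)) := by
                rw [hx]; ring
            _ = t₀ ^ 2 / 4 * r ^ (-2 * s) := by rw [h1, h2]
        calc t₀ ^ 2 / 4 * r ^ (-2 * s) = x ^ 2 / 4 * r ^ (-2 * σ - 2 * s) := hrw.symm
          _ ≤ |Real.sin x| ^ 2 * r ^ (-2 * σ - 2 * s) := by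
              apply mul_le_mul_of_nonneg_right (by linarith)
                (Real.rpow_nonneg hr0.le _)
    rw [ge_iff_le, mul_assoc, ← key]
    calc t₀ ^ 2 / 4 * ∫ ξ in A, ‖ξ‖ ^ (-2 * s)
        = ∫ ξ in A, (t₀ ^ 2 / 4) * ‖ξ‖ ^ (-2 * s) := (integral_const_mul _ _).symm
      _ ≤ _ := hcomp
  · -- blow up
    have hK : 0 < (t₀ ^ 2 / 4) * ωn * ε₁ ^ (p + 1) := by positivity
    have hlog : Tendsto (fun ε₀ : ℝ => (t₀ ^ 2 / 4) * ωn * ε₁ ^ (p + 1) *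
        (Real.log ε₁ - Real.log ε₀)) (nhdsWithin 0 (Set.Ioi 0)) atTop := by
      apply Filter.Tendsto.const_mul_atTop hK
      have h1 : Tendsto (fun ε₀ : ℝ => -Real.log ε₀) (nhdsWithin 0 (Set.Ioi 0)) atTop :=
        tendsto_neg_atBot_atTop.comp Real.tendsto_log_nhdsGT_zero
      have := tendsto_atTop_add_const_left _ (Real.log ε₁) h1
      simpa [sub_eq_add_neg] using this
    apply tendsto_atTop_mono' _ _ hlog
    filter_upwards [Ioo_mem_nhdsGT_of_mem (Set.mem_Ico.2 ⟨le_refl 0, hε₁⟩)] with ε₀ hε₀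
    have h0ε₀ : 0 < ε₀ := hε₀.1
    have hε₀₁ : ε₀ < ε₁ := hε₀.2
    have hnot : (0:ℝ) ∉ Set.uIcc ε₀ ε₁ := by
      rw [Set.uIcc_of_le hε₀₁.le]
      intro h
      exact absurd h.1 (not_le.2 h0ε₀)
    have hint : ε₁ ^ (p + 1) * (Real.log ε₁ - Real.log ε₀) ≤ ∫ r in ε₀..ε₁, r ^ p := by
      have h1 : (∫ r in ε₀..ε₁, ε₁ ^ (p + 1) * r⁻¹)
          = ε₁ ^ (p + 1) * (Real.log ε₁ - Real.log ε₀) := by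
        rw [intervalIntegral.integral_const_mul, integral_inv hnot,
          Real.log_div hε₁.ne' h0ε₀.ne']
      rw [← h1]
      apply intervalIntegral.integral_mono_on hε₀₁.le
      · apply ContinuousOn.intervalIntegrable
        apply continuousOn_const.mul
        exact ContinuousOn.inv₀ continuousOn_id fun x hx =>
          fun h => hnot (h ▸ hx)
      · exact intervalIntegral.intervalIntegrable_rpow (Or.inr hnot)
      · intro r hr
        have hr0 : 0 < r := lt_of_lt_of_le h0ε₀ hr.1
        have h2 : ε₁ ^ (p + 1) ≤ r ^ (p + 1) :=
          Real.rpow_le_rpow_of_nonpos hr0 hr.2 hp1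
        have h3 : r ^ p = r ^ (p + 1) * r⁻¹ := by
          rw [← Real.rpow_neg_one r, ← Real.rpow_add hr0]; ring_nf
        rw [h3]
        exact mul_le_mul_of_nonneg_right h2 (inv_nonneg.2 hr0.le)
    calc (t₀ ^ 2 / 4) * ωn * ε₁ ^ (p + 1) * (Real.log ε₁ - Real.log ε₀)
        = ((t₀ ^ 2 / 4) * ωn) * (ε₁ ^ (p + 1) * (Real.log ε₁ - Real.log ε₀)) := by ring
      _ ≤ ((t₀ ^ 2 / 4) * ωn) * ∫ r in ε₀..ε₁, r ^ p :=
          mul_le_mul_of_nonneg_left hint (by positivity)
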